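/- arXiv:1901.01058 — 7 statements merged into one kernel-verified Lean document; each statement's English description precedes it below -/
import Mathlib

section
/- Let q, q̄ be prime powers and t, t̄ ≥ 1 integers. If q^t > q̄^t̄, then there is no graph homomorphism from the q-Kneser graph qK_{2t:t} to the q̄-Kneser graph q̄K_{2t̄:t̄}. -/
open Polynomial

open Polynomial

/-- `X^a - X ∣ X^b - X` when `a - 1 ∣ b - 1`. -/
theorem aux_X_pow_sub_X_dvd {R : Type*} [CommRing R] {a b : ℕ} (ha : 1 ≤ a)
    (hb : 1 ≤ b) (h : a - 1 ∣ b - 1) : (X ^ a - X : R[X]) ∣ X ^ b - X := by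
  obtain ⟨k, hk⟩ := h
  have e1 : (X ^ a - X : R[X]) = X * (X ^ (a - 1) - 1) := by
    rw [mul_sub, mul_one, ← pow_succ', Nat.sub_add_cancel ha]
  have e2 : (X ^ b - X : R[X]) = X * (X ^ (b - 1) - 1) := by
    rw [mul_sub, mul_one, ← pow_succ', Nat.sub_add_cancel hb]
  rw [e1, e2]
  refine mul_dvd_mul_left _ ?_
  have := sub_dvd_pow_sub_pow (X ^ (a - 1) : R[X]) 1 k
  rwa [one_pow, ← pow_mul, ← hk] at this

/-- Counting bound: pairwise trivially-intersecting `m`-dim subspaces. -/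
theorem aux_count {Fb : Type*} [Field Fb] [Fintype Fb] {n m : ℕ} (hm : 1 ≤ m)
    {ι : Type*} [Fintype ι]
    (g : ι → {W : Submodule Fb (Fin n → Fb) // Module.finrank Fb W = m})
    (hg : ∀ i j, i ≠ j → (g i).1 ⊓ (g j).1 = ⊥) :
    Fintype.card ι * (Fintype.card Fb ^ m - 1) ≤ Fintype.card Fb ^ n - 1 := by
  classical
  set V := Fin n → Fb
  have hcardW : ∀ i, (Finset.univ.filter (fun v : V => v ∈ (g i).1)).card
      = Fintype.card Fb ^ m := by
    intro i
    rw [← Fintype.card_subtype]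
    rw [show Fintype.card {x : V // x ∈ (g i).1} = Fintype.card Fb ^ Module.finrank Fb (g i).1
      from Module.card_eq_pow_finrank, (g i).2]
  set A : ι → Finset V := fun i => (Finset.univ.filter (fun v : V => v ∈ (g i).1)).erase 0
    with hA
  have hAcard : ∀ i, (A i).card = Fintype.card Fb ^ m - 1 := by
    intro i
    rw [hA]
    rw [Finset.card_erase_of_mem (by simp [Submodule.zero_mem]), hcardW i]
  have hdisj : ∀ i ∈ Finset.univ, ∀ j ∈ Finset.univ, i ≠ j → Disjoint (A i) (A j) := by
    intro i _ j _ hij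
    rw [Finset.disjoint_left]
    intro v hvi hvj
    simp only [hA, Finset.mem_erase, Finset.mem_filter] at hvi hvj
    have : v ∈ (g i).1 ⊓ (g j).1 := Submodule.mem_inf.2 ⟨hvi.2.2, hvj.2.2⟩
    rw [hg i j hij] at this
    exact hvi.1 (Submodule.mem_bot _ |>.1 this)
  have hsub : Finset.univ.biUnion A ⊆ Finset.univ.erase 0 := by
    intro v hv
    rw [Finset.mem_biUnion] at hv
    obtain ⟨i, _, hvi⟩ := hv
    simp only [hA, Finset.mem_erase, Finset.mem_filter] at hvi
    exact Finset.mem_erase.2 ⟨hvi.1, Finset.mem_univ _⟩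
  have := Finset.card_le_card hsub
  rw [Finset.card_biUnion hdisj] at this
  have hsum : ∑ i, (A i).card = Fintype.card ι * (Fintype.card Fb ^ m - 1) := by
    rw [Finset.sum_congr rfl (fun i _ => hAcard i), Finset.sum_const, Finset.card_univ,
      smul_eq_mul]
  rw [hsum] at this
  calc Fintype.card ι * (Fintype.card Fb ^ m - 1) ≤ (Finset.univ.erase (0 : V)).card := this
    _ = Fintype.card Fb ^ n - 1 := by
        rw [Finset.card_erase_of_mem (Finset.mem_univ _), Finset.card_univ,
          Fintype.card_fun, Fintype.card_fin]

/-- There is an extension field of `F` of degree `t`. -/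
theorem aux_exists_ext (F : Type*) [Field F] [Fintype F] (t : ℕ) (ht : 1 ≤ t) :
    ∃ (K : Type) (_ : Field K) (_ : Fintype K) (φ : F →+* K),
      Fintype.card K = Fintype.card F ^ t := by
  classical
  obtain ⟨p, -, n, hp, hcard⟩ := FiniteField.card' (K := F)
  haveI : Fact p.Prime := ⟨hp⟩
  haveI : CharP F p := by
    obtain ⟨p', hp'⟩ := CharP.exists F
    haveI := hp'
    obtain ⟨n', hp'prime, hcard'⟩ := FiniteField.card F p'
    -- hp'prime : p'.Prime, hcard' : card = p'^n'
    have : p = p' := by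
      have h1 : p ∣ p' ^ (n' : ℕ) := by
        rw [← hcard', hcard]
        exact dvd_pow_self p n.2.ne'
      exact ((Nat.prime_dvd_prime_iff_eq hp hp'prime).1 (hp.dvd_of_dvd_pow h1))
    rwa [this]
  letI : Algebra (ZMod p) F := ZMod.algebra F p
  set K := GaloisField p (n * t) with hK
  haveI : Finite K := inferInstance
  letI : Fintype K := Fintype.ofFinite K
  have hnt : (n : ℕ) * t ≠ 0 := by positivity
  have hKcard : Fintype.card K = p ^ ((n : ℕ) * t) := by
    rw [← Nat.card_eq_fintype_card, GaloisField.card p _ hnt]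
  haveI : IsSplittingField (ZMod p) F (X ^ p ^ (n : ℕ) - X) :=
    FiniteField.isSplittingField_of_card_eq p n hcard
  have hsplits : Splits (Polynomial.map (algebraMap (ZMod p) K) (X ^ p ^ (n : ℕ) - X : (ZMod p)[X])) := by
    have h1 : Splits (Polynomial.map (algebraMap (ZMod p) K) (X ^ Fintype.card K - X : (ZMod p)[X])) :=
      FiniteField.splits_X_pow_card_sub_X p
    rw [hKcard] at h1
    simp only [Polynomial.map_sub, Polynomial.map_pow, map_X] at h1 ⊢
    refine Splits.of_dvd h1
      (FiniteField.X_pow_card_pow_sub_X_ne_zero _ hnt hp.one_lt) ?_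
    refine aux_X_pow_sub_X_dvd (Nat.one_le_pow _ _ hp.pos) (Nat.one_le_pow _ _ hp.pos) ?_
    have := Nat.sub_dvd_pow_sub_pow (p ^ (n : ℕ)) 1 t
    rwa [one_pow, ← pow_mul] at this
  refine ⟨K, inferInstance, inferInstance, (IsSplittingField.lift F (X ^ p ^ (n : ℕ) - X)
    hsplits).toRingHom, ?_⟩
  rw [hKcard, hcard, ← pow_mul]


/-- A spread of `F^{2n}` where `n = [K:F]`: `#K + 1` pairwise trivially-intersecting
`n`-dimensional subspaces. -/
theorem aux_spread (F K : Type*) [Field F] [Field K] [Algebra F K]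
    [FiniteDimensional F K] :
    ∃ g : Option K → {W : Submodule F (Fin (2 * Module.finrank F K) → F) //
        Module.finrank F W = Module.finrank F K},
      ∀ i j, i ≠ j → (g i).1 ⊓ (g j).1 = ⊥ := by
  classical
  set n := Module.finrank F K with hn
  set u : Option K → K × K := fun o => o.elim (0, 1) (fun a => (1, a)) with hu
  have hu0 : ∀ o, u o ≠ 0 := by
    rintro (_ | a) h <;> simp only [hu, Option.elim, Prod.ext_iff, Prod.fst_zero,
      Prod.snd_zero] at h
    · exact one_ne_zero h.2
    · exact one_ne_zero h.1
  have hindep : ∀ i j, i ≠ j →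
      Submodule.span K {u i} ⊓ Submodule.span K {u j} = ⊥ := by
    intro i j hij
    rw [Submodule.eq_bot_iff]
    intro x hx
    obtain ⟨h1, h2⟩ := Submodule.mem_inf.1 hx
    obtain ⟨c, rfl⟩ := Submodule.mem_span_singleton.1 h1
    obtain ⟨d, hd⟩ := Submodule.mem_span_singleton.1 h2
    match i, j with
    | some a, some b =>
      have hab : a ≠ b := fun h => hij (by rw [h])
      simp only [hu, Option.elim, Prod.smul_mk, smul_eq_mul, mul_one, Prod.ext_iff] at hd
      have hc : d = c := hd.1
      have : c * (a - b) = 0 := by rw [mul_sub, ← hd.2, hc, sub_self]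
      rcases mul_eq_zero.1 this with h | h
      · rw [h, zero_smul]
      · exact absurd (sub_eq_zero.1 h) hab
    | some a, none =>
      simp only [hu, Option.elim, Prod.smul_mk, smul_eq_mul, mul_one, mul_zero,
        Prod.ext_iff] at hd
      rw [← hd.1, zero_smul]
    | none, some a =>
      simp only [hu, Option.elim, Prod.smul_mk, smul_eq_mul, mul_one, mul_zero,
        Prod.ext_iff] at hd
      rw [show c = 0 by rw [← hd.2, hd.1, zero_mul], zero_smul]
    | none, none => exact absurd rfl hij
  have hfr : Module.finrank F (Fin (2 * n) → F) = Module.finrank F (K × K) := by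
    rw [Module.finrank_fin_fun, Module.finrank_prod, two_mul]
  let ε : (K × K) ≃ₗ[F] (Fin (2 * n) → F) := LinearEquiv.ofFinrankEq _ _ hfr.symm
  have hrs : ∀ o, Module.finrank F
      (Submodule.restrictScalars F (Submodule.span K {u o})) = n := by
    intro o
    have h1 : Module.finrank K (Submodule.restrictScalars F (Submodule.span K {u o})) = 1 :=
      finrank_span_singleton (hu0 o)
    have h2 := Module.finrank_mul_finrank F K
      (Submodule.restrictScalars F (Submodule.span K {u o}))
    rw [h1, mul_one] at h2
    exact h2.symm
  refine ⟨fun o => ⟨Submodule.map (ε : (K × K) →ₗ[F] (Fin (2 * n) → F))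
    (Submodule.restrictScalars F (Submodule.span K {u o})), ?_⟩, ?_⟩
  · rw [LinearEquiv.finrank_map_eq, hrs]
  · intro i j hij
    dsimp only
    rw [← Submodule.map_inf ((ε : (K × K) →ₗ[F] (Fin (2 * n) → F))) ε.injective]
    have : Submodule.restrictScalars F (Submodule.span K {u i}) ⊓
        Submodule.restrictScalars F (Submodule.span K {u j}) =
        Submodule.restrictScalars F (Submodule.span K {u i} ⊓ Submodule.span K {u j}) := by
      ext x
      simp [Submodule.mem_inf]
    rw [this, hindep i j hij, Submodule.restrictScalars_bot, Submodule.map_bot]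


/-- The `q`-Kneser graph `qK_{n:m}`: vertices are the `m`-dimensional subspaces of
`F^n`, two distinct subspaces being adjacent iff they intersect trivially. -/
def qKneserGraph (F : Type*) [Field F] (n m : ℕ) :
    SimpleGraph {W : Submodule F (Fin n → F) // Module.finrank F W = m} :=
  SimpleGraph.fromRel (fun W W' => W.1 ⊓ W'.1 = ⊥)

/-- If `q^t > q̄^t̄` then there is no graph homomorphism from `qK_{2t:t}`
to `q̄K_{2t̄:t̄}`. -/
theorem stmt_2 (q qbar t tbar : ℕ) (hq : IsPrimePow q) (hqbar : IsPrimePow qbar)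
    (ht : 1 ≤ t) (htbar : 1 ≤ tbar)
    (F Fbar : Type*) [Field F] [Fintype F] [Field Fbar] [Fintype Fbar]
    (hF : Fintype.card F = q) (hFbar : Fintype.card Fbar = qbar)
    (hgt : qbar ^ tbar < q ^ t) :
    IsEmpty (qKneserGraph F (2 * t) t →g qKneserGraph Fbar (2 * tbar) tbar) := by
  constructor
  intro f
  obtain ⟨K, _, _, φ, hKcard⟩ := aux_exists_ext F t ht
  letI : Algebra F K := φ.toAlgebra
  haveI : Finite K := inferInstance
  haveI : FiniteDimensional F K := Module.Finite.of_finite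
  have hq2 : 2 ≤ q := hq.two_le
  have hfrk : Module.finrank F K = t := by
    have h := Module.card_eq_pow_finrank (K := F) (V := K)
    rw [hKcard, hF] at h
    exact (Nat.pow_right_injective hq2 h.symm)
  subst hfrk
  obtain ⟨g, hg⟩ := aux_spread F K
  have hadj : ∀ i j, i ≠ j → (qKneserGraph F (2 * Module.finrank F K) (Module.finrank F K)).Adj (g i) (g j) := by
    intro i j hij
    have hne : g i ≠ g j := by
      intro h
      have hb := hg i j hij
      rw [h, inf_idem] at hb
      have h0 := (g j).2
      rw [hb, finrank_bot] at h0
      omega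
    simp only [qKneserGraph, SimpleGraph.fromRel_adj]
    exact ⟨hne, Or.inl (hg i j hij)⟩
  have hg' : ∀ i j : Option K, i ≠ j → (f (g i)).1 ⊓ (f (g j)).1 = ⊥ := by
    intro i j hij
    have h := f.map_adj (hadj i j hij)
    simp only [qKneserGraph, SimpleGraph.fromRel_adj] at h
    rcases h.2 with h' | h'
    · exact h'
    · rwa [inf_comm] at h'
  have hb := aux_count htbar (fun i => f (g i)) hg'
  rw [Fintype.card_option, hKcard, hF, hFbar, two_mul, pow_add] at hb
  -- hb : (q ^ n + 1) * (qbar ^ tbar - 1) ≤ qbar ^ tbar * qbar ^ tbar - 1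
  have h2 : 2 ≤ qbar ^ tbar := le_trans hqbar.two_le (Nat.le_self_pow (by omega) _)
  have hN : qbar ^ tbar + 2 ≤ q ^ Module.finrank F K + 1 := by omega
  have chain : (qbar ^ tbar + 2) * (qbar ^ tbar - 1) ≤ qbar ^ tbar * qbar ^ tbar - 1 :=
    le_trans (Nat.mul_le_mul_right _ hN) hb
  generalize hQg : qbar ^ tbar = Q at chain h2
  obtain ⟨R, rfl⟩ : ∃ R, Q = R + 2 := ⟨Q - 2, by omega⟩
  have e1 : (R + 2 + 2) * (R + 2 - 1) = R * R + 5 * R + 4 := by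
    have h' : R + 2 - 1 = R + 1 := by omega
    rw [h']; ring
  have e2 : (R + 2) * (R + 2) - 1 = R * R + 4 * R + 3 := by
    have h' : (R + 2) * (R + 2) = R * R + 4 * R + 4 := by ring
    generalize hS : R * R = S at *
    omega
  rw [e1, e2] at chain
  generalize hS : R * R = S at chain
  omega
end

section
/- Let q be a prime power, F a finite field with |F| = q, and let t, h, α be positive integers with 2 ≤ α ≤ h. Let C be a (t;h,α)_q-independent configuration, i.e., a set of t-dimensional F-subspaces of V = F^(ht) such that for any α distinct members V_{i₁}, ..., V_{i_α} of C one has dim(V_{i₁} + V_{i₂} + ... + V_{i_α}) = αt. Then |C| ≤ (q^((h-α+2)t) - 1)/(q^t - 1) + α - 2. -/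
open Module

lemma finrank_finsetSup_le {F V : Type*} [Field F] [AddCommGroup V] [Module F V]
    [FiniteDimensional F V] (s : Finset (Submodule F V)) :
    finrank F ↥(s.sup id) ≤ ∑ W ∈ s, finrank F ↥W := by
  induction s using Finset.cons_induction with
  | empty => simp
  | cons a s ha ih =>
    rw [Finset.sup_cons, Finset.sum_cons]
    calc finrank F ↥(id a ⊔ s.sup id) ≤ finrank F ↥a + finrank F ↥(s.sup id) :=
          Submodule.finrank_add_le_finrank_add_finrank _ _
      _ ≤ finrank F ↥a + ∑ W ∈ s, finrank F ↥W := by omega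

set_option maxHeartbeats 1000000 in
/-- Size bound for a `(t;h,α)_q`-independent configuration: a set `C` of
`t`-dimensional subspaces of `F^(ht)` such that any `α` distinct members have sum of
dimension exactly `αt` satisfies `|C| ≤ (q^((h-α+2)t) - 1)/(q^t - 1) + α - 2`. -/
theorem stmt_7 (q t h α : ℕ) (hq : IsPrimePow q) (ht : 1 ≤ t)
    (hα : 2 ≤ α) (hαh : α ≤ h)
    (F : Type*) [Field F] [Fintype F] (hF : Fintype.card F = q)
    (C : Finset (Submodule F (Fin (h * t) → F)))
    (hdim : ∀ W ∈ C, Module.finrank F W = t)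
    (hIC : ∀ s ⊆ C, s.card = α → Module.finrank F ↥(s.sup id) = α * t) :
    C.card ≤ (q ^ ((h - α + 2) * t) - 1) / (q ^ t - 1) + α - 2 := by
  classical
  set V := Fin (h * t) → F with hV
  have hq2 : 2 ≤ q := hq.two_le
  have hqt : 2 ≤ q ^ t := by
    calc 2 = 2 ^ 1 := rfl
    _ ≤ q ^ 1 := Nat.pow_le_pow_left hq2 1
    _ ≤ q ^ t := Nat.pow_le_pow_right (by omega) ht
  have hqm : q ^ t ≤ q ^ ((h - α + 2) * t) := by
    apply Nat.pow_le_pow_right (by omega)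
    exact Nat.le_mul_of_pos_left t (by omega)
  have hD : 1 ≤ (q ^ ((h - α + 2) * t) - 1) / (q ^ t - 1) :=
    (Nat.one_le_div_iff (by omega)).mpr (by omega)
  by_cases hsmall : C.card ≤ α - 1
  · omega
  have hCcard : α ≤ C.card := by omega
  -- key dimension lemma
  have hsub : ∀ s' ⊆ C, s'.card ≤ α → finrank F ↥(s'.sup id) = s'.card * t := by
    intro s' hs'C hs'α
    obtain ⟨u, hs'u, huC, hu⟩ := Finset.exists_subsuperset_card_eq hs'C hs'α hCcard
    have hsum : finrank F ↥(u.sup id) = α * t := hIC u huC hu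
    have hdecomp : u.sup id = s'.sup id ⊔ (u \ s').sup id := by
      rw [← Finset.sup_union, Finset.union_sdiff_of_subset hs'u]
    have hupper : ∀ v : Finset (Submodule F V), v ⊆ C → finrank F ↥(v.sup id) ≤ v.card * t := by
      intro v hvC
      calc finrank F ↥(v.sup id) ≤ ∑ W ∈ v, finrank F ↥W := finrank_finsetSup_le v
        _ = v.card * t := by
            rw [Finset.sum_congr rfl (fun W hW => hdim W (hvC hW))]
            simp [mul_comm]
    have h1 : finrank F ↥(s'.sup id) ≤ s'.card * t := hupper s' hs'C
    have h2 : finrank F ↥((u \ s').sup id) ≤ (α - s'.card) * t := by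
      have := hupper (u \ s') (fun x hx => huC (Finset.sdiff_subset hx))
      rwa [Finset.card_sdiff_of_subset hs'u, hu] at this
    have h3 : α * t ≤ finrank F ↥(s'.sup id) + (α - s'.card) * t := by
      calc α * t = finrank F ↥(u.sup id) := hsum.symm
        _ ≤ finrank F ↥(s'.sup id) + finrank F ↥((u \ s').sup id) := by
            rw [hdecomp]; exact Submodule.finrank_add_le_finrank_add_finrank _ _
        _ ≤ _ := by omega
    have h4 : s'.card * t + (α - s'.card) * t = α * t := by
      rw [← add_mul]; congr 1; omega
    omega
  -- pick a base set of α - 2 subspaces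
  obtain ⟨s₀, hs₀C, hs₀⟩ := Finset.exists_subset_card_eq (s := C) (n := α - 2) (by omega)
  set U : Submodule F V := s₀.sup id with hUdef
  have hU : finrank F ↥U = (α - 2) * t := by rw [hUdef, hsub s₀ hs₀C (by omega), hs₀]
  set Q := V ⧸ U with hQdef
  set π := U.mkQ with hπ
  have hVrank : finrank F V = h * t := by
    show finrank F (Fin (h * t) → F) = h * t
    rw [Module.finrank_pi F, Fintype.card_fin]
  have hQ : finrank F Q = (h - α + 2) * t := by
    have h1 := Submodule.finrank_quotient_add_finrank U
    rw [hVrank, hU] at h1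
    have h2 : (h - α + 2) * t + (α - 2) * t = h * t := by
      rw [← add_mul]; congr 1; omega
    exact Nat.add_right_cancel (h1.trans h2.symm)
  -- members outside s₀
  set C' := C \ s₀ with hC'
  have hC'card : C'.card = C.card - (α - 2) := by
    rw [hC', Finset.card_sdiff_of_subset hs₀C, hs₀]
  -- each such W meets U trivially
  have hdisjU : ∀ W ∈ C', W ⊓ U = ⊥ := by
    intro W hW
    have hWC : W ∈ C := (Finset.mem_sdiff.mp hW).1
    have hWs₀ : W ∉ s₀ := (Finset.mem_sdiff.mp hW).2
    have hins : finrank F ↥((insert W s₀).sup id) = (α - 1) * t := by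
      rw [hsub _ (Finset.insert_subset hWC hs₀C)
          (by rw [Finset.card_insert_of_notMem hWs₀, hs₀]; omega),
        Finset.card_insert_of_notMem hWs₀, hs₀]
      congr 1; omega
    rw [Finset.sup_insert] at hins
    simp only [id] at hins
    have key := Submodule.finrank_sup_add_finrank_inf_eq W U
    rw [hdim W hWC, hU, hins] at key
    have h5 : (α - 1) * t = t + (α - 2) * t := by
      have hstep : α - 1 = 1 + (α - 2) := by omega
      rw [hstep, add_mul, one_mul]
    rw [h5] at key
    have h0 : finrank F ↥(W ⊓ U) = 0 :=
      Nat.add_left_cancel (key.trans (add_zero (t + (α - 2) * t)).symm)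
    exact Submodule.finrank_eq_zero.mp h0
  -- image of W in the quotient has rank t
  have himrank : ∀ W ∈ C', finrank F ↥(W.map π) = t := by
    intro W hW
    have hWC : W ∈ C := (Finset.mem_sdiff.mp hW).1
    have h1 := LinearMap.finrank_range_add_finrank_ker (π.domRestrict W)
    rw [LinearMap.range_domRestrict, LinearMap.ker_domRestrict] at h1
    have hker : (Submodule.comap W.subtype (LinearMap.ker π)) = ⊥ := by
      rw [hπ, Submodule.ker_mkQ]
      rw [eq_bot_iff]
      intro x hx
      have hxWU : (x : V) ∈ W ⊓ U := ⟨x.2, hx⟩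
      rw [hdisjU W hW] at hxWU
      have hx0 : (x : V) = 0 := by simpa using hxWU
      simp only [Submodule.mem_bot]
      exact Subtype.ext (by simpa using hx0)
    rw [hker] at h1
    simp only [finrank_bot, add_zero] at h1
    exact h1.trans (hdim W hWC)
  -- distinct members have images meeting trivially
  have himdisj : ∀ W ∈ C', ∀ W' ∈ C', W ≠ W' → (W.map π) ⊓ (W'.map π) = ⊥ := by
    intro W hW W' hW' hne
    have hWC : W ∈ C := (Finset.mem_sdiff.mp hW).1
    have hW'C : W' ∈ C := (Finset.mem_sdiff.mp hW').1
    have hWs₀ : W ∉ s₀ := (Finset.mem_sdiff.mp hW).2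
    have hW's₀ : W' ∉ s₀ := (Finset.mem_sdiff.mp hW').2
    have hins1 : finrank F ↥(W' ⊔ U) = (α - 1) * t := by
      have key := hsub (insert W' s₀) (Finset.insert_subset hW'C hs₀C)
        (by rw [Finset.card_insert_of_notMem hW's₀, hs₀]; omega)
      rw [Finset.sup_insert, Finset.card_insert_of_notMem hW's₀, hs₀] at key
      simp only [id] at key
      rw [key]; congr 1; omega
    have hins2 : finrank F ↥(W ⊔ (W' ⊔ U)) = α * t := by
      have hmem : W ∉ insert W' s₀ := by
        simp only [Finset.mem_insert]; push_neg; exact ⟨hne, hWs₀⟩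
      have key := hsub (insert W (insert W' s₀))
        (Finset.insert_subset hWC (Finset.insert_subset hW'C hs₀C))
        (by rw [Finset.card_insert_of_notMem hmem, Finset.card_insert_of_notMem hW's₀, hs₀]
            omega)
      rw [Finset.sup_insert, Finset.sup_insert, Finset.card_insert_of_notMem hmem,
        Finset.card_insert_of_notMem hW's₀, hs₀] at key
      simp only [id] at key
      rw [key]; congr 1; omega
    have key := Submodule.finrank_sup_add_finrank_inf_eq W (W' ⊔ U)
    rw [hins1, hins2, hdim W hWC] at key
    have h5 : α * t = t + (α - 1) * t := by
      have hstep : α = 1 + (α - 1) := by omega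
      nth_rewrite 1 [hstep]
      rw [add_mul, one_mul]
    rw [h5] at key
    have h0 : finrank F ↥(W ⊓ (W' ⊔ U)) = 0 :=
      Nat.add_left_cancel (key.trans (add_zero (t + (α - 1) * t)).symm)
    have hint : W ⊓ (W' ⊔ U) = ⊥ := Submodule.finrank_eq_zero.mp h0
    rw [eq_bot_iff]
    intro x hx
    obtain ⟨hx1, hx2⟩ := Submodule.mem_inf.mp hx
    obtain ⟨w, hwW, hwx⟩ := Submodule.mem_map.mp hx1
    obtain ⟨w', hw'W', hw'x⟩ := Submodule.mem_map.mp hx2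
    have heq : Submodule.Quotient.mk (p := U) w = Submodule.Quotient.mk (p := U) w' := by
      rw [← Submodule.mkQ_apply, ← Submodule.mkQ_apply, ← hπ, hwx, hw'x]
    have hsub' : w - w' ∈ U := (Submodule.Quotient.eq U).mp heq
    have hwmem : w ∈ W ⊓ (W' ⊔ U) := by
      refine Submodule.mem_inf.mpr ⟨hwW, ?_⟩
      have hw : w = w' + (w - w') := by abel
      rw [hw]
      exact Submodule.add_mem _ (Submodule.mem_sup_left hw'W') (Submodule.mem_sup_right hsub')
    rw [hint] at hwmem
    have hw0 : w = 0 := by simpa using hwmem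
    rw [Submodule.mem_bot, ← hwx, hw0]
    exact map_zero π
  -- counting in the quotient
  have : Fintype Q := Fintype.ofFinite Q
  have hcardQ : Fintype.card Q = q ^ ((h - α + 2) * t) := by
    rw [card_eq_pow_finrank (K := F) (V := Q), hF, hQ]
  have hScard : ∀ W ∈ C',
      (((W.map π : Submodule F Q) : Set Q).toFinset.erase 0).card = q ^ t - 1 := by
    intro W hW
    have h0 : (0 : Q) ∈ ((W.map π : Submodule F Q) : Set Q).toFinset := by
      rw [Set.mem_toFinset]
      exact Submodule.zero_mem _
    rw [Finset.card_erase_of_mem h0, Set.toFinset_card]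
    have hc : Fintype.card ↥((W.map π : Submodule F Q) : Set Q)
        = Fintype.card ↥(W.map π : Submodule F Q) := Fintype.card_congr (Equiv.refl _)
    rw [hc, card_eq_pow_finrank (K := F), hF, himrank W hW]
  have hdisjS : ∀ W ∈ C', ∀ W' ∈ C', W ≠ W' →
      Disjoint (((W.map π : Submodule F Q) : Set Q).toFinset.erase 0)
        (((W'.map π : Submodule F Q) : Set Q).toFinset.erase 0) := by
    intro W hW W' hW' hne
    rw [Finset.disjoint_left]
    intro x hx hx'
    simp only [Finset.mem_erase, Set.mem_toFinset, SetLike.mem_coe] at hx hx'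
    have hxmem : x ∈ (W.map π) ⊓ (W'.map π) := Submodule.mem_inf.mpr ⟨hx.2, hx'.2⟩
    rw [himdisj W hW W' hW' hne] at hxmem
    exact hx.1 (by simpa using hxmem)
  have hbiU : (C'.biUnion (fun W => ((W.map π : Submodule F Q) : Set Q).toFinset.erase 0)).card
      = C'.card * (q ^ t - 1) := by
    rw [Finset.card_biUnion hdisjS, Finset.sum_congr rfl hScard, Finset.sum_const, smul_eq_mul]
  have hbound : C'.card * (q ^ t - 1) ≤ q ^ ((h - α + 2) * t) - 1 := by
    rw [← hbiU]
    calc (C'.biUnion (fun W => ((W.map π : Submodule F Q) : Set Q).toFinset.erase 0)).card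
        ≤ (Finset.univ.erase (0 : Q)).card := by
          apply Finset.card_le_card
          intro x hx
          obtain ⟨W, hWmem, hxW⟩ := Finset.mem_biUnion.mp hx
          simp only [Finset.mem_erase, Set.mem_toFinset] at hxW
          exact Finset.mem_erase.mpr ⟨hxW.1, Finset.mem_univ x⟩
      _ = q ^ ((h - α + 2) * t) - 1 := by
          rw [Finset.card_erase_of_mem (Finset.mem_univ 0), Finset.card_univ, hcardQ]
  have hfinal : C'.card ≤ (q ^ ((h - α + 2) * t) - 1) / (q ^ t - 1) :=
    (Nat.le_div_iff_mul_le (by omega)).mpr hbound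
  omega
end

section
/- Let q be a real number with q ≥ 1, and let h ≥ 2, t ≥ 1, and i be integers with 1 ≤ i ≤ h - 1. Then (q^t + q^(t-1)/(h-1))^i ≤ Σ_{j=0}^{i} q^(t·i - j). -/
/-- For real `q ≥ 1` and integers `h ≥ 2`, `t ≥ 1`, `1 ≤ i ≤ h - 1`:
`(q^t + q^(t-1)/(h-1))^i ≤ Σ_{j=0}^{i} q^(t·i - j)`. -/
theorem stmt_8 (q : ℝ) (hq : 1 ≤ q) (h t i : ℕ) (hh : 2 ≤ h) (ht : 1 ≤ t)
    (hi1 : 1 ≤ i) (hi2 : i ≤ h - 1) :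
    (q ^ t + q ^ (t - 1) / ((h : ℝ) - 1)) ^ i ≤
      ∑ j ∈ Finset.range (i + 1), q ^ (t * i - j) := by
  have hh1 : (1:ℝ) ≤ (h:ℝ) - 1 := by
    have : (2:ℝ) ≤ (h:ℝ) := by exact_mod_cast hh
    linarith
  have hhpos : (0:ℝ) < (h:ℝ) - 1 := by linarith
  have hqpos : (0:ℝ) < q := lt_of_lt_of_le one_pos hq
  rw [add_comm, add_pow]
  apply Finset.sum_le_sum
  intro j hj
  have hj' : j ≤ i := Nat.lt_succ_iff.mp (Finset.mem_range.mp hj)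
  have hexp : (t-1)*j + t*(i-j) = t*i - j := by
    have hji : j ≤ t*i := le_trans hj' (Nat.le_mul_of_pos_left i ht)
    zify [ht, hj', hji]
    ring
  have hC : (Nat.choose i j : ℝ) ≤ ((h:ℝ)-1)^j := by
    calc (Nat.choose i j : ℝ) ≤ ((i:ℝ))^j := by
          exact_mod_cast Nat.choose_le_pow i j
      _ ≤ ((h:ℝ)-1)^j := by
          apply pow_le_pow_left₀ (by positivity)
          have hi : (i:ℝ) ≤ ((h-1 : ℕ) : ℝ) := by exact_mod_cast hi2
          have : ((h-1 : ℕ) : ℝ) = (h:ℝ) - 1 := by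
            push_cast [Nat.cast_sub (by omega : 1 ≤ h)]; ring
          linarith
  have hkey : (Nat.choose i j : ℝ) / ((h:ℝ)-1)^j ≤ 1 :=
    div_le_one_of_le₀ hC (by positivity)
  have heq : (q ^ (t - 1) / ((h : ℝ) - 1)) ^ j * (q ^ t) ^ (i - j) *
      (Nat.choose i j : ℝ) = q ^ (t*i - j) * ((Nat.choose i j : ℝ) / ((h:ℝ)-1)^j) := by
    rw [div_pow, ← pow_mul, ← pow_mul, ← hexp, pow_add]
    ring
  rw [heq]
  calc q ^ (t*i - j) * ((Nat.choose i j : ℝ) / ((h:ℝ)-1)^j)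
      ≤ q ^ (t*i - j) * 1 :=
        mul_le_mul_of_nonneg_left hkey (by positivity)
    _ = q ^ (t*i - j) := mul_one _
end

section
/- Let q be a real number with q ≥ 2 (in the paper, a prime power), and let h ≥ 3 and t be integers with t ≥ h. Then Σ_{i=0}^{h-1} (q^t + q^(t-1)/(h-1))^i ≤ (q^((h-1)t+1) - 1)/(q - 1). -/
/-- For real `q ≥ 2` and integers `h ≥ 3`, `t ≥ h`:
`Σ_{i=0}^{h-1} (q^t + q^(t-1)/(h-1))^i ≤ (q^((h-1)t+1) - 1)/(q - 1)`. -/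
theorem stmt_9 (q : ℝ) (hq : 2 ≤ q) (h t : ℕ) (hh : 3 ≤ h) (ht : h ≤ t) :
    ∑ i ∈ Finset.range h, (q ^ t + q ^ (t - 1) / ((h : ℝ) - 1)) ^ i ≤
      (q ^ ((h - 1) * t + 1) - 1) / (q - 1) := by
  have hq0 : (0:ℝ) < q := by linarith
  have hq1 : q ≠ 1 := by linarith
  have hhr : (1:ℝ) ≤ (h:ℝ) - 1 := by
    have : (3:ℝ) ≤ (h:ℝ) := by exact_mod_cast hh
    linarith
  -- Step 1: termwise bound
  have key : ∀ i ∈ Finset.range h,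
      (q ^ t + q ^ (t - 1) / ((h : ℝ) - 1)) ^ i
        ≤ ∑ j ∈ Finset.Ico (t * i - i) (t * i + 1), q ^ j := by
    intro i hi
    rw [Finset.mem_range] at hi
    rw [add_pow]
    rw [Finset.sum_Ico_eq_sum_range]
    have hlen : t * i + 1 - (t * i - i) = i + 1 := by
      have : i ≤ t * i := Nat.le_mul_of_pos_left i (by omega)
      omega
    rw [hlen]
    apply Finset.sum_le_sum
    intro k hk
    rw [Finset.mem_range] at hk
    have hki : k ≤ i := by omega
    have hexp : (q ^ t) ^ k * (q ^ (t - 1) / ((h:ℝ) - 1)) ^ (i - k)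
        = q ^ (t * i - i + k) / ((h:ℝ) - 1) ^ (i - k) := by
      rw [div_pow, ← pow_mul, ← pow_mul, mul_div_assoc', ← pow_add]
      congr 2
      have h4 : i ≤ t * i := Nat.le_mul_of_pos_left i (by omega)
      have h5 : 1 ≤ t := by omega
      zify [h4, hki, h5]
      ring
    rw [hexp, div_mul_eq_mul_div, div_le_iff₀ (by positivity)]
    have hC : ((i.choose k : ℝ)) ≤ ((h:ℝ) - 1) ^ (i - k) := by
      calc ((i.choose k : ℝ)) = ((i.choose (i - k) : ℝ)) := by
            rw [Nat.choose_symm hki]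
        _ ≤ ((i : ℝ)) ^ (i - k) := by
            exact_mod_cast Nat.choose_le_pow i (i - k)
        _ ≤ ((h:ℝ) - 1) ^ (i - k) := by
            apply pow_le_pow_left₀ (by positivity)
            have : (i:ℝ) + 1 ≤ (h:ℝ) := by exact_mod_cast hi
            linarith
    exact mul_le_mul_of_nonneg_left hC (by positivity)
  -- Step 2: sum the bounds
  calc ∑ i ∈ Finset.range h, (q ^ t + q ^ (t - 1) / ((h : ℝ) - 1)) ^ i
      ≤ ∑ i ∈ Finset.range h, ∑ j ∈ Finset.Ico (t * i - i) (t * i + 1), q ^ j :=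
        Finset.sum_le_sum key
    _ = ∑ j ∈ (Finset.range h).biUnion (fun i => Finset.Ico (t * i - i) (t * i + 1)), q ^ j := by
        rw [Finset.sum_biUnion]
        have hdisj : ∀ a b : ℕ, a < b → b < h →
            Disjoint (Finset.Ico (t * a - a) (t * a + 1))
              (Finset.Ico (t * b - b) (t * b + 1)) := by
          intro a b hab hb
          apply Finset.disjoint_left.mpr
          intro x hx hx'
          rw [Finset.mem_Ico] at hx hx'
          have h1 : t * (a + 1) ≤ t * b := Nat.mul_le_mul_left t (by omega)
          have h2 : b < t := by omega
          have h3 : b ≤ t * b := Nat.le_mul_of_pos_left b (by omega)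
          have h4 : t * (a + 1) = t * a + t := by ring
          omega
        intro a ha b hb hab
        simp only [Finset.coe_range, Set.mem_Iio] at ha hb
        rcases lt_or_gt_of_ne hab with hlt | hgt
        · exact hdisj a b hlt hb
        · exact (hdisj b a hgt ha).symm
    _ ≤ ∑ j ∈ Finset.range ((h - 1) * t + 1), q ^ j := by
        apply Finset.sum_le_sum_of_subset_of_nonneg
        · intro x hx
          rw [Finset.mem_biUnion] at hx
          obtain ⟨i, hi, hx⟩ := hx
          rw [Finset.mem_range] at hi
          rw [Finset.mem_Ico] at hx
          rw [Finset.mem_range]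
          have : t * i ≤ t * (h - 1) := Nat.mul_le_mul_left t (by omega)
          have : t * (h-1) = (h-1) * t := Nat.mul_comm _ _
          omega
        · intro j _ _; positivity
    _ = (q ^ ((h - 1) * t + 1) - 1) / (q - 1) := geom_sum_eq hq1 _
end

section
/- Let q be a real number with q ≥ 1, and let h ≥ 3, t ≥ 1, and i be integers with 1 ≤ i ≤ h - 1. Then (q^t + q^(t-1)/(h-1)²)^i ≤ q^(t·i) + q^(t·i - 1). -/
lemma aux_stmt10 (q m P : ℝ) (hq : 1 ≤ q) (hm : 2 ≤ m) (hP : 0 ≤ P) :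
    ∀ i : ℕ, 1 ≤ i → (i : ℝ) ≤ m →
      (P + P / (q * m ^ 2)) ^ i ≤ P ^ i + ((i : ℝ) / m) * (P ^ i / q) := by
  have hq0 : 0 < q := lt_of_lt_of_le one_pos hq
  have hm0 : 0 < m := lt_of_lt_of_le two_pos hm
  intro i
  induction i with
  | zero => intro h1 _; omega
  | succ n ih =>
    intro _ hle
    rcases Nat.eq_zero_or_pos n with hn | hn
    · subst hn
      simp only [zero_add, pow_one, Nat.cast_one]
      have h1 : P / (q * m ^ 2) ≤ 1 / m * (P / q) := by
        rw [div_le_iff₀ (by positivity)]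
        have e : 1 / m * (P / q) * (q * m ^ 2) = P * m := by field_simp
        rw [e]; nlinarith
      linarith
    · have hn1 : (1 : ℝ) ≤ n := by exact_mod_cast hn
      have hle' : (n : ℝ) ≤ m := by push_cast at hle ⊢; linarith
      have IH := ih hn hle'
      have hX : 0 ≤ P + P / (q * m ^ 2) := by positivity
      set A := P ^ n with hAdef
      have hA : 0 ≤ A := pow_nonneg hP n
      have step : (P + P / (q * m ^ 2)) ^ (n + 1)
          ≤ (A + ((n : ℝ) / m) * (A / q)) * (P + P / (q * m ^ 2)) := by
        rw [pow_succ]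
        exact mul_le_mul_of_nonneg_right IH hX
      refine le_trans step ?_
      have eP : P ^ (n + 1) = A * P := pow_succ P n
      rw [eP]
      push_cast
      have hnm : (n : ℝ) + 1 ≤ m := by push_cast at hle; linarith
      set B := A * P with hBdef
      have hB : 0 ≤ B := mul_nonneg hA hP
      have expand : (A + (n : ℝ) / m * (A / q)) * (P + P / (q * m ^ 2))
          = B + B * (1 / (q * m ^ 2)) + (n : ℝ) / m * (B / q)
            + B * ((n : ℝ) / m * (1 / (q * q * m ^ 2))) := by
        rw [hBdef]; field_simp; ring
      rw [expand]
      have hnum : q * m + (n : ℝ) ≤ q * m ^ 2 := by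
        nlinarith [mul_nonneg (by linarith : (0:ℝ) ≤ m - 1)
          (by nlinarith : (0:ℝ) ≤ q * m - 1)]
      have sc : 1 / (q * m ^ 2) + (n : ℝ) / m * (1 / (q * q * m ^ 2))
          ≤ 1 / m * (1 / q) := by
        have e2 : 1 / (q * m ^ 2) + (n : ℝ) / m * (1 / (q * q * m ^ 2))
            = (q * m + n) / (q * q * m ^ 3) := by field_simp
        have e3 : 1 / m * (1 / q) = (q * m ^ 2) / (q * q * m ^ 3) := by
          field_simp
        rw [e2, e3]
        apply div_le_div_of_nonneg_right hnum ?_ |>.trans_eq rfl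
        · positivity
      have hsb : B * (1 / (q * m ^ 2)) + B * ((n : ℝ) / m * (1 / (q * q * m ^ 2)))
          ≤ B * (1 / m * (1 / q)) := by nlinarith
      have e4 : B * (1 / m * (1 / q)) = 1 / m * (B / q) := by ring
      rw [e4] at hsb
      have : ((n : ℝ) + 1) / m * (B / q) = (n : ℝ) / m * (B / q) + 1 / m * (B / q) := by
        ring
      rw [this]
      linarith

/-- For real `q ≥ 1` and integers `h ≥ 3`, `t ≥ 1`, `1 ≤ i ≤ h - 1`:
`(q^t + q^(t-1)/(h-1)²)^i ≤ q^(t·i) + q^(t·i - 1)`. -/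
theorem stmt_10 (q : ℝ) (hq : 1 ≤ q) (h t i : ℕ) (hh : 3 ≤ h) (ht : 1 ≤ t)
    (hi1 : 1 ≤ i) (hi2 : i ≤ h - 1) :
    (q ^ t + q ^ (t - 1) / ((h : ℝ) - 1) ^ 2) ^ i ≤
      q ^ (t * i) + q ^ (t * i - 1) := by
  have hq0 : 0 < q := lt_of_lt_of_le one_pos hq
  have hm : (2 : ℝ) ≤ (h : ℝ) - 1 := by
    have : (3 : ℝ) ≤ (h : ℝ) := by exact_mod_cast hh
    linarith
  have hP : (0:ℝ) ≤ q ^ t := by positivity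
  have him : (i : ℝ) ≤ (h : ℝ) - 1 := by
    have h1 : i + 1 ≤ h := by omega
    have : (i : ℝ) + 1 ≤ (h : ℝ) := by exact_mod_cast h1
    linarith
  have key := aux_stmt10 q ((h:ℝ) - 1) (q ^ t) hq hm hP i hi1 him
  have e1 : q ^ (t - 1) = q ^ t / q := by
    rw [eq_div_iff (ne_of_gt hq0), ← pow_succ]
    congr 1; omega
  have e2 : q ^ (t * i - 1) = q ^ (t * i) / q := by
    rw [eq_div_iff (ne_of_gt hq0), ← pow_succ]
    congr 1
    have : 1 ≤ t * i := Nat.one_le_iff_ne_zero.mpr (by positivity)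
    omega
  have e3 : q ^ (t * i) = (q ^ t) ^ i := by rw [← pow_mul]
  rw [e1, e2, e3]
  have e4 : q ^ t / q / ((h : ℝ) - 1) ^ 2 = q ^ t / (q * ((h:ℝ) - 1) ^ 2) := by
    rw [div_div]
  rw [e4]
  refine le_trans key ?_
  have h1 : (i : ℝ) / ((h:ℝ) - 1) ≤ 1 := by
    rw [div_le_one (by linarith)]; exact him
  have h2 : (0:ℝ) ≤ (q ^ t) ^ i / q := by positivity
  nlinarith
end

section
/- Let q be a real number with q ≥ 2 (in the paper, a prime power), and let h ≥ 3 and t ≥ 2 be integers. Then Σ_{i=0}^{h-1} (q^t + q^(t-1)/(h-1)²)^i ≤ (q^((h-1)t+1) - 1)/(q - 1). -/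
lemma aux_pow_bound_11 (ε : ℝ) (hε : 0 ≤ ε) :
    ∀ i : ℕ, 2 * i * ε ≤ 1 → (1 + ε) ^ i ≤ 1 + 2 * i * ε := by
  intro i
  induction i with
  | zero => simp
  | succ n ih =>
    intro hcond
    have hn : (n : ℝ) ≤ (n : ℝ) + 1 := by linarith
    have h1 : 2 * (n : ℝ) * ε ≤ 1 := by
      push_cast at hcond
      nlinarith
    have h2 := ih h1
    have hpos : (0 : ℝ) ≤ 1 + ε := by linarith
    have hps : (1 + ε) ^ (n + 1) = (1 + ε) ^ n * (1 + ε) := pow_succ _ _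
    push_cast
    nlinarith [mul_le_mul_of_nonneg_right h2 hpos, mul_nonneg hε hε]

/-- For real `q ≥ 2` and integers `h ≥ 3`, `t ≥ 2`:
`Σ_{i=0}^{h-1} (q^t + q^(t-1)/(h-1)²)^i ≤ (q^((h-1)t+1) - 1)/(q - 1)`. -/
theorem stmt_11 (q : ℝ) (hq : 2 ≤ q) (h t : ℕ) (hh : 3 ≤ h) (ht : 2 ≤ t) :
    ∑ i ∈ Finset.range h, (q ^ t + q ^ (t - 1) / ((h : ℝ) - 1) ^ 2) ^ i ≤
      (q ^ ((h - 1) * t + 1) - 1) / (q - 1) := by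
  obtain ⟨m, rfl⟩ : ∃ m, h = m + 1 := ⟨h - 1, by omega⟩
  have hm : 2 ≤ m := by omega
  have hmR : (2 : ℝ) ≤ (m : ℝ) := by exact_mod_cast hm
  have hq0 : (0 : ℝ) < q := by linarith
  have hcast : ((m + 1 : ℕ) : ℝ) - 1 = (m : ℝ) := by push_cast; ring
  rw [hcast]
  set a : ℝ := q ^ t + q ^ (t - 1) / (m : ℝ) ^ 2 with ha
  -- a = q^t * (1 + ε)
  set ε : ℝ := 1 / (q * (m : ℝ) ^ 2) with hε
  have hε0 : 0 ≤ ε := by positivity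
  have hqt : q ^ t = q ^ (t - 1) * q := by
    rw [← pow_succ]; congr 1; omega
  have haeq : a = q ^ t * (1 + ε) := by
    rw [ha, hε, hqt]
    have hm0 : (0 : ℝ) < (m : ℝ) ^ 2 := by positivity
    field_simp
  -- key bound : a^i ≤ q^(t*i) + q^(t*i - 1) for 1 ≤ i ≤ m
  have key : ∀ i : ℕ, 1 ≤ i → i ≤ m → a ^ i ≤ q ^ (t * i) + q ^ (t * i - 1) := by
    intro i hi1 him
    have hiR : (i : ℝ) ≤ (m : ℝ) := by exact_mod_cast him
    have hcond : 2 * (i : ℝ) * ε ≤ 1 := by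
      rw [hε, mul_one_div, div_le_one (by positivity)]
      nlinarith
    have hb := aux_pow_bound_11 ε hε0 i hcond
    have h2i : 2 * (i : ℝ) * ε ≤ 1 / q := by
      rw [hε, mul_one_div, div_le_div_iff₀ (by positivity) hq0]
      nlinarith [mul_le_mul_of_nonneg_right hiR hq0.le,
        mul_nonneg (mul_nonneg (by linarith : (0:ℝ) ≤ (m:ℝ) - 2)
          (by linarith : (0:ℝ) ≤ (m:ℝ))) hq0.le]
    have hqti : q ^ (t * i) = q ^ (t * i - 1) * q := by
      rw [← pow_succ]; congr 1
      have : 1 ≤ t * i := Nat.one_le_iff_ne_zero.mpr (by positivity)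
      omega
    have hqtipos : (0 : ℝ) < q ^ (t * i) := by positivity
    calc a ^ i = q ^ (t * i) * (1 + ε) ^ i := by
          rw [haeq, mul_pow, ← pow_mul]
      _ ≤ q ^ (t * i) * (1 + 2 * i * ε) :=
          mul_le_mul_of_nonneg_left hb (le_of_lt hqtipos)
      _ ≤ q ^ (t * i) * (1 + 1 / q) :=
          mul_le_mul_of_nonneg_left (by linarith) (le_of_lt hqtipos)
      _ = q ^ (t * i) + q ^ (t * i - 1) := by
          rw [hqti]; field_simp
  -- main induction
  have main : ∀ n : ℕ, n ≤ m →
      ∑ i ∈ Finset.range (n + 1), a ^ i ≤ ∑ j ∈ Finset.range (n * t + 1), q ^ j := by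
    intro n
    induction n with
    | zero => intro _; simp
    | succ k ih =>
      intro hk
      have hklem := ih (by omega)
      rw [Finset.sum_range_succ]
      have hsplit : (k + 1) * t + 1 = (k * t + 1) + t := by ring
      have hT : ∑ j ∈ Finset.range ((k * t + 1) + t), q ^ j =
          ∑ j ∈ Finset.range (k * t + 1), q ^ j + ∑ j ∈ Finset.range t, q ^ (k * t + 1 + j) :=
        Finset.sum_range_add _ _ _
      rw [hsplit, hT]
      have hkey := key (k + 1) (by omega) hk
      have hblock : q ^ (t * (k + 1)) + q ^ (t * (k + 1) - 1) ≤
          ∑ j ∈ Finset.range t, q ^ (k * t + 1 + j) := by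
        obtain ⟨s, rfl⟩ : ∃ s, t = s + 2 := ⟨t - 2, by omega⟩
        rw [Finset.sum_range_succ, Finset.sum_range_succ]
        have e1 : k * (s + 2) + 1 + (s + 1) = (s + 2) * (k + 1) := by ring
        have e2 : k * (s + 2) + 1 + s = (s + 2) * (k + 1) - 1 := by omega
        rw [e1, e2]
        have : (0 : ℝ) ≤ ∑ j ∈ Finset.range s, q ^ (k * (s + 2) + 1 + j) := by
          apply Finset.sum_nonneg; intro j _; positivity
        linarith
      linarith
  have hfin := main m le_rfl
  have hq1 : q ≠ 1 := by linarith
  rw [← geom_sum_eq hq1]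
  have hexp : (m + 1 - 1) * t + 1 = m * t + 1 := by rw [Nat.add_sub_cancel]
  rw [hexp]
  exact hfin
end

section
/- Let q ≥ 2 be an integer (a prime power in the paper), and let h ≥ 3 and t be integers with t ≥ h. If x is a real number with x ≥ 0 and Σ_{i=0}^{h-1} x^i ≥ (q^((h-1)t+1) - 1)/(q - 1), then x ≥ q^t + q^(t-1)/(h-1). -/
/-- `(1+a)^i ≤ 1 + i a + (i a)^2` when `0 ≤ a`, `i ≤ n`, `n·a ≤ 1`. -/
lemma aux_pow_bound (a : ℝ) (ha : 0 ≤ a) (n : ℕ) (hna : (n:ℝ) * a ≤ 1) :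
    ∀ i : ℕ, i ≤ n → (1 + a) ^ i ≤ 1 + i * a + (i * a) ^ 2 := by
  intro i
  induction i with
  | zero => intro _; norm_num
  | succ i ih =>
    intro hin
    have hi : i ≤ n := by omega
    have ih' := ih hi
    have hia : (i:ℝ) * a ≤ 1 := by
      have : (i:ℝ) ≤ n := by exact_mod_cast hi
      nlinarith
    have h1 : (1+a)^(i+1) = (1+a)^i * (1+a) := by ring
    have h2 : (1+a)^i * (1+a) ≤ (1 + i*a + (i*a)^2) * (1+a) := by
      have : (0:ℝ) ≤ 1 + a := by linarith
      nlinarith [pow_nonneg (by linarith : (0:ℝ) ≤ 1+a) i]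
    have h3 : (1 + (i:ℝ)*a + ((i:ℝ)*a)^2) * (1+a) ≤ 1 + (i+1:ℕ) * a + ((i+1:ℕ) * a)^2 := by
      push_cast
      have hs : (0:ℝ) ≤ (i:ℝ)*a := by positivity
      nlinarith [mul_nonneg (mul_nonneg ha hs) (by linarith : (0:ℝ) ≤ 1 - (i:ℝ)*a), sq_nonneg a]
    calc (1+a)^(i+1) = (1+a)^i * (1+a) := h1
      _ ≤ _ := h2
      _ ≤ _ := h3


/-- Block comparison: the sum of the three top powers of each block is at most the full
geometric sum. -/
lemma aux_block_sum (c : ℝ) (hc : 0 ≤ c) (u : ℕ) :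
    ∀ m : ℕ, 1 + ∑ k ∈ Finset.range m,
        (c ^ (k*(u+3)+u+1) + c ^ (k*(u+3)+u+2) + c ^ (k*(u+3)+u+3))
      ≤ ∑ j ∈ Finset.range (m*(u+3)+1), c ^ j := by
  intro m
  induction m with
  | zero => simp
  | succ m ih =>
    have hsplit : (m+1)*(u+3)+1 = (m*(u+3)+1) + (u+3) := by ring
    rw [Finset.sum_range_succ, hsplit, Finset.sum_range_add]
    have hblock : c ^ (m*(u+3)+u+1) + c ^ (m*(u+3)+u+2) + c ^ (m*(u+3)+u+3)
        ≤ ∑ i ∈ Finset.range (u+3), c ^ (m*(u+3)+1+i) := by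
      rw [Finset.sum_range_succ, Finset.sum_range_succ, Finset.sum_range_succ]
      have h0 : (0:ℝ) ≤ ∑ i ∈ Finset.range u, c ^ (m*(u+3)+1+i) := by positivity
      have e1 : m*(u+3)+1+u = m*(u+3)+u+1 := by ring
      have e2 : m*(u+3)+1+(u+1) = m*(u+3)+u+2 := by ring
      have e3 : m*(u+3)+1+(u+2) = m*(u+3)+u+3 := by ring
      rw [e1, e2, e3]
      linarith
    linarith


/-- Arithmetic core of the scalar lower bound for `t ≥ h`: if `q ≥ 2` is an integer,
`h ≥ 3`, `t ≥ h`, and `x ≥ 0` is a real with `Σ_{i=0}^{h-1} x^i ≥ (q^((h-1)t+1)-1)/(q-1)`,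
then `x ≥ q^t + q^(t-1)/(h-1)`. -/
theorem stmt_12 (q : ℕ) (hq : 2 ≤ q) (h t : ℕ) (hh : 3 ≤ h) (ht : h ≤ t)
    (x : ℝ) (hx : 0 ≤ x)
    (hsum : ((q : ℝ) ^ ((h - 1) * t + 1) - 1) / ((q : ℝ) - 1) ≤
      ∑ i ∈ Finset.range h, x ^ i) :
    (q : ℝ) ^ t + (q : ℝ) ^ (t - 1) / ((h : ℝ) - 1) ≤ x := by
  have hc2 : (2:ℝ) ≤ (q:ℝ) := by exact_mod_cast hq
  set c : ℝ := (q:ℝ) with hcdef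
  have hc0 : (0:ℝ) < c := by linarith
  have hc1 : (1:ℝ) < c := by linarith
  set M : ℕ := h - 1 with hMdef
  have hM2 : 2 ≤ M := by omega
  have hhM : h = M + 1 := by omega
  have hMr : ((h:ℝ) - 1) = (M:ℝ) := by
    have : (M:ℝ) = (h:ℝ) - 1 := by
      rw [hMdef]; push_cast [Nat.cast_sub (by omega : 1 ≤ h)]; ring
    linarith
  have hM0 : (0:ℝ) < (M:ℝ) := by
    have : (2:ℝ) ≤ (M:ℝ) := by exact_mod_cast hM2
    linarith
  obtain ⟨u, hu⟩ : ∃ u, t = u + 3 := ⟨t - 3, by omega⟩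
  have ht1 : t - 1 = u + 2 := by omega
  set a : ℝ := 1 / (c * M) with hadef
  have ha0 : 0 ≤ a := by positivity
  have hMa : (M:ℝ) * a = 1 / c := by
    rw [hadef]; field_simp
  set y : ℝ := c ^ t + c ^ (t-1) / ((h:ℝ) - 1) with hydef
  have hy : y = c ^ t * (1 + a) := by
    rw [hydef, hMr, hadef, ht1, hu]
    have hMne : (M:ℝ) ≠ 0 := ne_of_gt hM0
    have hcne : c ≠ 0 := ne_of_gt hc0
    field_simp
    ring
  -- key bound: sum of powers of y is at most the geometric sum
  have key : ∑ i ∈ Finset.range h, y ^ i ≤ ∑ j ∈ Finset.range (M*t+1), c ^ j := by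
    rw [hhM, Finset.sum_range_succ']
    have hterm : ∀ k ∈ Finset.range M, y ^ (k+1) ≤
        c ^ (k*(u+3)+u+1) + c ^ (k*(u+3)+u+2) + c ^ (k*(u+3)+u+3) := by
      intro k hk
      have hkM : k + 1 ≤ M := by
        simp only [Finset.mem_range] at hk; omega
      have hbnd := aux_pow_bound a ha0 M (by rw [hMa]; rw [div_le_one hc0]; linarith)
        (k+1) hkM
      have hcp : (0:ℝ) < c ^ t := by positivity
      have hka : ((k+1:ℕ):ℝ) * a ≤ 1 / c := by
        rw [← hMa]
        have : ((k+1:ℕ):ℝ) ≤ (M:ℝ) := by exact_mod_cast hkM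
        nlinarith
      have hka0 : (0:ℝ) ≤ ((k+1:ℕ):ℝ) * a := by positivity
      have h1 : y ^ (k+1) ≤ c ^ t * c ^ (t*k) * (1 + ((k+1:ℕ):ℝ)*a + (((k+1:ℕ):ℝ)*a)^2) := by
        rw [hy, mul_pow, ← pow_mul]
        have : t * (k+1) = t + t*k := by ring
        rw [this, pow_add]
        have hpos : (0:ℝ) ≤ c ^ t * c ^ (t*k) := by positivity
        exact mul_le_mul_of_nonneg_left hbnd hpos
      have h2 : c ^ t * c ^ (t*k) * (1 + ((k+1:ℕ):ℝ)*a + (((k+1:ℕ):ℝ)*a)^2)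
          ≤ c ^ t * c ^ (t*k) * (1 + 1/c + (1/c)^2) := by
        have hpos : (0:ℝ) ≤ c ^ t * c ^ (t*k) := by positivity
        have : 1 + ((k+1:ℕ):ℝ)*a + (((k+1:ℕ):ℝ)*a)^2 ≤ 1 + 1/c + (1/c)^2 := by
          nlinarith [hka, hka0]
        exact mul_le_mul_of_nonneg_left this hpos
      have h3 : c ^ t * c ^ (t*k) * (1 + 1/c + (1/c)^2)
          = c ^ (k*(u+3)+u+1) + c ^ (k*(u+3)+u+2) + c ^ (k*(u+3)+u+3) := by
        rw [hu, ← pow_add,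
          show (u+3) + (u+3)*k = (k*(u+3)+u+1)+2 by ring,
          show k*(u+3)+u+3 = (k*(u+3)+u+1)+2 by ring,
          show k*(u+3)+u+2 = (k*(u+3)+u+1)+1 by ring, pow_add, pow_add, pow_add]
        have hcne : c ≠ 0 := ne_of_gt hc0
        field_simp
        ring
      calc y ^ (k+1) ≤ _ := h1
        _ ≤ _ := h2
        _ = _ := h3
    have hsum1 : ∑ k ∈ Finset.range M, y ^ (k+1) ≤ ∑ k ∈ Finset.range M,
        (c ^ (k*(u+3)+u+1) + c ^ (k*(u+3)+u+2) + c ^ (k*(u+3)+u+3)) :=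
      Finset.sum_le_sum hterm
    have hblk := aux_block_sum c (le_of_lt hc0) u M
    have hM3 : M*t+1 = M*(u+3)+1 := by rw [hu]
    rw [hM3]
    simp only [pow_zero]
    linarith
  -- rewrite the threshold as a geometric sum
  have hgeom : ((q:ℝ) ^ ((h-1)*t+1) - 1) / ((q:ℝ) - 1) = ∑ j ∈ Finset.range (M*t+1), c ^ j := by
    rw [geom_sum_eq (ne_of_gt hc1)]
  -- conclude by monotonicity
  by_contra hlt
  push_neg at hlt
  have hxy : x < y := hlt
  have hmono : ∑ i ∈ Finset.range h, x ^ i < ∑ i ∈ Finset.range h, y ^ i := by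
    apply Finset.sum_lt_sum
    · intro i _
      exact pow_le_pow_left₀ hx (le_of_lt hxy) i
    · refine ⟨1, Finset.mem_range.mpr (by omega), ?_⟩
      simpa using hxy
  rw [hgeom] at hsum
  linarith
end
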